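/- arXiv:2305.11670 — 2 statements merged into one kernel-verified Lean document; each statement's English description precedes it below -/
import Mathlib

section
/- Let ω⁻, ω⁺, κ⁻, κ⁺, ρ⁻, ρ⁺ be nonzero complex numbers. Suppose u(x,t) = v(x)·exp(-iω⁻t) for t<0 and u(x,t) = v(x)·exp(-iω⁺t) for t≥0 (with v not identically zero) is a distributional solution of the wave equation ∂ₜ((1/κ(t))∂ₜu) − (1/ρ(t))Δu = 0, where κ(t)=κ⁻, ρ(t)=ρ⁻ for t<0 and κ(t)=κ⁺, ρ(t)=ρ⁺ for t≥0. Then ω⁺/ω⁻ = κ⁺/κ⁻ = ρ⁻/ρ⁺ (the temporal Snell's law). -/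
open Complex

/-- Temporal Snell's law: if `u(x,t) = v(x)e^{-iω⁻t}` (t<0), `v(x)e^{-iω⁺t}` (t≥0) is a
quasi-harmonic solution of the wave equation with piecewise constant parameters, i.e.
`v` (not identically zero, with Laplacian `Δv`) satisfies the Helmholtz equations
obtained on each time interval and `(1/κ)∂ₜu` is continuous across `t = 0`, then
`ω⁺/ω⁻ = κ⁺/κ⁻ = ρ⁻/ρ⁺`. -/
theorem temporal_snell_law
    (ωm ωp κm κp ρm ρp : ℂ)
    (hωm : ωm ≠ 0) (hωp : ωp ≠ 0) (hκm : κm ≠ 0) (hκp : κp ≠ 0)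
    (hρm : ρm ≠ 0) (hρp : ρp ≠ 0)
    (v Δv : EuclideanSpace ℝ (Fin 3) → ℂ)
    (hv : ∃ x, v x ≠ 0)
    -- Helmholtz equation for negative times, coming from the wave equation
    (hHelmM : ∀ x, ωm ^ 2 * v x / κm + Δv x / ρm = 0)
    -- Helmholtz equation for nonnegative times
    (hHelmP : ∀ x, ωp ^ 2 * v x / κp + Δv x / ρp = 0)
    -- continuity of (1/κ)∂ₜu across the time boundary t = 0
    (hjump : ∀ x, (1 / κm) * (-Complex.I * ωm) * v x = (1 / κp) * (-Complex.I * ωp) * v x) :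
    ωp / ωm = κp / κm ∧ ωp / ωm = ρm / ρp := by
  obtain ⟨x, hx⟩ := hv
  have e := hjump x
  field_simp at e
  -- e : I * ωm * v x * κp = I * ωp * v x * κm
  have h0 : v x * (ωm * κp) = v x * (ωp * κm) := by linear_combination -(v x) * e
  have h1 : ωm * κp = ωp * κm := mul_left_cancel₀ hx h0
  have hm := hHelmM x
  have hp := hHelmP x
  field_simp at hm hp
  have h2 : v x * (ωm ^ 2 * ρm * κp) = v x * (ωp ^ 2 * ρp * κm) := by
    linear_combination κp * hm - κm * hp
  have h3 : ωm ^ 2 * ρm * κp = ωp ^ 2 * ρp * κm := mul_left_cancel₀ hx h2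
  have h4 : (ωp * κm) * (ωp * ρp) = (ωp * κm) * (ωm * ρm) := by
    linear_combination -h3 + (ωm * ρm) * h1
  have h5 : ωp * ρp = ωm * ρm := mul_left_cancel₀ (mul_ne_zero hωp hκm) h4
  constructor
  · field_simp
    linear_combination -h1
  · field_simp
    linear_combination h5
end

section
/- Let ω₁, ω₂ ∈ ℂ, V₁ ∈ ℂ*, and let I(ω₁), I(ω₂) be 2×2 complex matrices with D := I₁₁(ω₂)det(I(ω₁)) − I₁₁(ω₁)det(I(ω₂)) ≠ 0. Define p and q as in Theorem 2.7 (p = V₁·(det I(ω₁) − det I(ω₂) + I₂₂(ω₁)I₁₁(ω₂) − I₂₂(ω₂)I₁₁(ω₁))/D, q = V₁²·(I₂₂(ω₁) − I₂₂(ω₂))/D), and set X₁ = −p/2 ± √(p²/4 − q). If additionally X₁det(I(ωⱼ)) + V₁I₂₂(ωⱼ) ≠ 0 for j = 1,2, then X₂ := −V₂(V₁ + I₁₁(ω₁)X₁)/(X₁det(I(ω₁)) + V₁I₂₂(ω₁)) satisfies simultaneously, for j = 1 and j = 2: X₁X₂det(I(ωⱼ)) + X₁V₂I₁₁(ωⱼ)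 + X₂V₁I₂₂(ωⱼ) + V₁V₂ = 0. -/
open Matrix

/-- Double defect design (Theorem 2.7): with `X₁` a root of the explicit quadratic and
`X₂` defined by the explicit formula, both defect equations (at `ω₁` and `ω₂`) hold. -/
theorem double_defect_design
    (V₁ V₂ : ℂ) (hV₁ : V₁ ≠ 0) (hV₂ : V₂ ≠ 0)
    (M₁ M₂ : Matrix (Fin 2) (Fin 2) ℂ)
    (D : ℂ) (hD : D = M₂ 0 0 * M₁.det - M₁ 0 0 * M₂.det) (hD0 : D ≠ 0)
    (p q : ℂ)
    (hp : p = V₁ * (M₁.det - M₂.det + M₁ 1 1 * M₂ 0 0 - M₂ 1 1 * M₁ 0 0) / D)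
    (hq : q = V₁ ^ 2 * (M₁ 1 1 - M₂ 1 1) / D)
    (s X₁ : ℂ) (hs : s ^ 2 = p ^ 2 / 4 - q)
    (hX₁ : X₁ = -p / 2 + s ∨ X₁ = -p / 2 - s)
    (hden₁ : X₁ * M₁.det + V₁ * M₁ 1 1 ≠ 0)
    (hden₂ : X₁ * M₂.det + V₁ * M₂ 1 1 ≠ 0)
    (X₂ : ℂ) (hX₂ : X₂ = -V₂ * (V₁ + M₁ 0 0 * X₁) / (X₁ * M₁.det + V₁ * M₁ 1 1)) :
    (X₁ * X₂ * M₁.det + X₁ * V₂ * M₁ 0 0 + X₂ * V₁ * M₁ 1 1 + V₁ * V₂ = 0) ∧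
    (X₁ * X₂ * M₂.det + X₁ * V₂ * M₂ 0 0 + X₂ * V₁ * M₂ 1 1 + V₁ * V₂ = 0) := by
  have hquad : X₁ ^ 2 + p * X₁ + q = 0 := by
    rcases hX₁ with h | h <;> subst h <;> linear_combination hs
  have hkey : X₁ ^ 2 * (M₂ 0 0 * M₁.det - M₁ 0 0 * M₂.det)
      + X₁ * V₁ * (M₁.det - M₂.det + M₁ 1 1 * M₂ 0 0 - M₂ 1 1 * M₁ 0 0)
      + V₁ ^ 2 * (M₁ 1 1 - M₂ 1 1) = 0 := by
    have hp' : p * D = V₁ * (M₁.det - M₂.det + M₁ 1 1 * M₂ 0 0 - M₂ 1 1 * M₁ 0 0) := by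
      rw [hp]; field_simp
    have hq' : q * D = V₁ ^ 2 * (M₁ 1 1 - M₂ 1 1) := by
      rw [hq]; field_simp
    linear_combination D * hquad - X₁ * hp' - hq' - X₁ ^ 2 * hD
  constructor
  · rw [hX₂]; field_simp; ring
  · rw [hX₂]
    field_simp
    linear_combination V₂ * hkey
end
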